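/- arXiv:2309.04238 — 2 statements merged into one kernel-verified Lean document; each statement's English description precedes it below -/
import Mathlib

section
/- Let Λ > 0, d ≥ 4 an integer, r₀ = ((d-3)/Λ)^{1/2}, and consider g(r) = 1 - m·r^{-(d-3)} - Λr²/(d-1) for a parameter m ∈ ℝ. Then g has a double zero (a point r* > 0 with g(r*) = 0 and g'(r*) = 0) if and only if m = 2r₀^{d-3}/(d-1), in which case r* = r₀. -/
/-- The Schwarzschild–de Sitter blackening factor `g(r) = 1 - m r^{-(d-3)} - Λr²/(d-1)` with
`Λ > 0` has a double zero (some `r* > 0` with `g(r*) = 0 = g'(r*)`) iff `m = 2 r₀^{d-3}/(d-1)`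
where `r₀ = ((d-3)/Λ)^{1/2}`, in which case the double zero is at `r* = r₀`. -/
theorem SdS_double_zero_iff_extremal_mass (d : ℕ) (hd : 4 ≤ d) (Λ : ℝ) (hΛ : 0 < Λ) (m : ℝ)
    (r₀ : ℝ) (hr₀ : r₀ = Real.sqrt (((d : ℝ) - 3) / Λ)) (g : ℝ → ℝ)
    (hg : g = fun r : ℝ => 1 - m * r ^ (-((d : ℤ) - 3)) - Λ * r ^ 2 / ((d : ℝ) - 1)) :
    ((∃ r : ℝ, 0 < r ∧ g r = 0 ∧ deriv g r = 0) ↔ m = 2 * r₀ ^ (d - 3) / ((d : ℝ) - 1)) ∧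
    (∀ r : ℝ, 0 < r → g r = 0 → deriv g r = 0 → r = r₀) := by
  subst hg
  have h3d : (3:ℕ) ≤ d := by omega
  have hd3 : (0:ℝ) < (d:ℝ) - 3 := by
    have h4 : (4:ℝ) ≤ (d:ℝ) := by exact_mod_cast hd
    linarith
  have hd1 : (0:ℝ) < (d:ℝ) - 1 := by linarith
  have hd1ne : ((d:ℝ) - 1) ≠ 0 := hd1.ne'
  have hr₀pos : 0 < r₀ := by
    rw [hr₀]; exact Real.sqrt_pos.mpr (div_pos hd3 hΛ)
  have hr₀sq : r₀ ^ 2 = ((d:ℝ) - 3) / Λ := by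
    rw [hr₀, Real.sq_sqrt (div_pos hd3 hΛ).le]
  have hΛr₀ : Λ * r₀ ^ 2 = (d:ℝ) - 3 := by
    rw [hr₀sq]; field_simp
  set e : ℕ := d - 3 with he
  have hecast : ((e:ℝ)) = (d:ℝ) - 3 := by
    rw [he, Nat.cast_sub h3d]; norm_num
  have hez : -((d:ℤ) - 3) = -((e : ℕ) : ℤ) := by
    rw [he, Nat.cast_sub h3d]; norm_num
  have hzpow : ∀ r : ℝ, r ^ (-((d:ℤ) - 3)) = (r ^ e)⁻¹ := by
    intro r; rw [hez, zpow_neg, zpow_natCast]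
  -- derivative computation
  have hderiv : ∀ r : ℝ, 0 < r →
      deriv (fun r : ℝ => 1 - m * r ^ (-((d : ℤ) - 3)) - Λ * r ^ 2 / ((d : ℝ) - 1)) r
      = m * (e:ℝ) * (r ^ (e+1))⁻¹ - Λ * (2 * r) / ((d:ℝ) - 1) := by
    intro r hr
    have h1 : HasDerivAt (fun r : ℝ => r ^ (-((d:ℤ)-3)))
        (((-((d:ℤ)-3) : ℤ) : ℝ) * r ^ ((-((d:ℤ)-3)) - 1)) r :=
      hasDerivAt_zpow _ r (Or.inl hr.ne')
    have h2 := ((hasDerivAt_const r (1:ℝ)).sub (h1.const_mul m)).sub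
      (((hasDerivAt_pow 2 r).const_mul Λ).div_const ((d:ℝ)-1))
    rw [HasDerivAt.deriv (f := fun r : ℝ => 1 - m * r ^ (-((d : ℤ) - 3)) - Λ * r ^ 2 / ((d : ℝ) - 1)) h2]
    have hz1 : r ^ ((-((d:ℤ)-3)) - 1) = (r ^ (e+1))⁻¹ := by
      rw [show (-((d:ℤ)-3)) - 1 = -(((e+1 : ℕ) : ℤ)) by omega, zpow_neg, zpow_natCast]
    have hc : ((-((d:ℤ)-3) : ℤ) : ℝ) = -((e:ℝ)) := by
      rw [hecast]; push_cast; ring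
    rw [hz1, hc]
    norm_num
    ring
  constructor
  · constructor
    · rintro ⟨r, hr, hg0, hg'0⟩
      rw [hderiv r hr] at hg'0
      simp only [hzpow] at hg0
      have hRne : (r:ℝ)^e ≠ 0 := (pow_pos hr e).ne'
      have hR1ne : (r:ℝ)^(e+1) ≠ 0 := (pow_pos hr (e+1)).ne'
      have E1 : ((d:ℝ)-1) * r^e = m * ((d:ℝ)-1) + Λ * r^2 * r^e := by
        field_simp at hg0
        linear_combination hg0
      have E2 : m * ((d:ℝ)-3) * ((d:ℝ)-1) = 2 * Λ * r^2 * r^e := by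
        rw [hecast] at hg'0
        field_simp at hg'0
        linear_combination hg'0
      have hm : m * ((d:ℝ)-1) = 2 * r^e := by
        have key : m * ((d:ℝ)-1) * ((d:ℝ)-1) = 2 * r^e * ((d:ℝ)-1) := by
          linear_combination E2 - 2 * E1
        exact mul_right_cancel₀ hd1ne key
      have hΛr : Λ * r^2 = (d:ℝ)-3 := by
        have : Λ * r^2 * r^e = ((d:ℝ)-3) * r^e := by
          linear_combination -E1 - hm
        exact mul_right_cancel₀ hRne this
      have hr2 : r^2 = r₀^2 := by
        have := hΛr.trans hΛr₀.symm
        exact mul_left_cancel₀ hΛ.ne' this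
      have hrr : r = r₀ := by
        have h0 : (r - r₀) * (r + r₀) = 0 := by linear_combination hr2
        rcases mul_eq_zero.mp h0 with h | h
        · linarith
        · linarith
      rw [eq_div_iff hd1ne]
      rw [hrr] at hm
      linear_combination hm
    · intro hm
      refine ⟨r₀, hr₀pos, ?_, ?_⟩
      have hΛeq : Λ = ((d:ℝ)-3)/r₀^2 :=
        (eq_div_iff (pow_ne_zero 2 hr₀pos.ne')).mpr hΛr₀
      have hRne : r₀^e ≠ 0 := (pow_pos hr₀pos e).ne'
      · simp only [hzpow]
        rw [hm, hΛeq, pow_succ]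
        field_simp
        ring
      · have hΛeq : Λ = ((d:ℝ)-3)/r₀^2 :=
          (eq_div_iff (pow_ne_zero 2 hr₀pos.ne')).mpr hΛr₀
        have hRne : r₀^e ≠ 0 := (pow_pos hr₀pos e).ne'
        rw [hderiv r₀ hr₀pos, hm, hecast, hΛeq, pow_succ]
        field_simp
        ring
  · intro r hr hg0 hg'0
    rw [hderiv r hr] at hg'0
    simp only [hzpow] at hg0
    have hRne : (r:ℝ)^e ≠ 0 := (pow_pos hr e).ne'
    have hR1ne : (r:ℝ)^(e+1) ≠ 0 := (pow_pos hr (e+1)).ne'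
    have E1 : ((d:ℝ)-1) * r^e = m * ((d:ℝ)-1) + Λ * r^2 * r^e := by
      field_simp at hg0
      linear_combination hg0
    have E2 : m * ((d:ℝ)-3) * ((d:ℝ)-1) = 2 * Λ * r^2 * r^e := by
      rw [hecast] at hg'0
      field_simp at hg'0
      linear_combination hg'0
    have hm : m * ((d:ℝ)-1) = 2 * r^e := by
      have key : m * ((d:ℝ)-1) * ((d:ℝ)-1) = 2 * r^e * ((d:ℝ)-1) := by
        linear_combination E2 - 2 * E1
      exact mul_right_cancel₀ hd1ne key
    have hΛr : Λ * r^2 = (d:ℝ)-3 := by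
      have : Λ * r^2 * r^e = ((d:ℝ)-3) * r^e := by
        linear_combination -E1 - hm
      exact mul_right_cancel₀ hRne this
    have hr2 : r^2 = r₀^2 := by
      have := hΛr.trans hΛr₀.symm
      exact mul_left_cancel₀ hΛ.ne' this
    have h0 : (r - r₀) * (r + r₀) = 0 := by linear_combination hr2
    rcases mul_eq_zero.mp h0 with h | h
    · linarith
    · linarith
end

section
/- Let d ≥ 4, Λ, C be real with C ≠ 0, and φ(ρ) = -(4/C²)·(Λ/(d-3))·[1 - (2/(d-1))·(1+Cρ/2)^{-(d-3)} - ((d-3)/(d-1))·(1+Cρ/2)²]. Then for all n ≥ 1, the n-th derivative satisfies φ^{(n+2)}(0) = (-1)^n·(2/(d-1))·((d-2+n)!/(d-3)!)·(C/2)^n·Λ. -/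
lemma prod_shift_factorial (a : ℕ) : ∀ k : ℕ,
    ∏ j ∈ Finset.range k, ((a : ℝ) + 1 + j) = (Nat.factorial (a + k) : ℝ) / (Nat.factorial a : ℝ)
  | 0 => by
      have h2 : (Nat.factorial a : ℝ) ≠ 0 := Nat.cast_ne_zero.mpr (Nat.factorial_ne_zero a)
      simp [div_self h2]
  | (k+1) => by
      rw [Finset.prod_range_succ, prod_shift_factorial a k]
      have h1 : (a + (k+1)).factorial = (a + k + 1) * (a + k).factorial := by
        rw [← Nat.add_assoc]; exact Nat.factorial_succ _
      have h2 : (Nat.factorial a : ℝ) ≠ 0 := Nat.cast_ne_zero.mpr (Nat.factorial_ne_zero a)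
      rw [h1]; push_cast
      field_simp [h1]
      ring

/-- All-order derivatives at `ρ = 0` of the closed-form metric function `φ` of the extremal
Schwarzschild–de Sitter solution: for `n ≥ 1`,
`φ^{(n+2)}(0) = (-1)ⁿ (2/(d-1)) ((d-2+n)!/(d-3)!) (C/2)ⁿ Λ`. -/
theorem extremal_SdS_phi_all_derivs (d : ℕ) (hd : 4 ≤ d) (Λ C : ℝ) (hC : C ≠ 0) (φ : ℝ → ℝ)
    (hφ : ∀ ρ : ℝ, 1 + C * ρ / 2 > 0 →
      φ ρ = -(4 / C ^ 2) * (Λ / ((d : ℝ) - 3)) *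
        (1 - (2 / ((d : ℝ) - 1)) * (1 + C * ρ / 2) ^ (-((d : ℤ) - 3)) -
          (((d : ℝ) - 3) / ((d : ℝ) - 1)) * (1 + C * ρ / 2) ^ 2)) :
    ∀ n : ℕ, 1 ≤ n →
      iteratedDeriv (n + 2) φ 0 =
        (-1 : ℝ) ^ n * (2 / ((d : ℝ) - 1)) *
          ((Nat.factorial (d - 2 + n) : ℝ) / (Nat.factorial (d - 3) : ℝ)) * (C / 2) ^ n * Λ := by
  intro n hn
  set c : ℝ := C / 2 with hc
  set u : ℝ → ℝ := fun x => 1 + c * x with hu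
  set m : ℤ := -((d : ℤ) - 3) with hm
  set A : ℝ := -(4 / C ^ 2) * (Λ / ((d : ℝ) - 3)) with hA
  set B : ℝ := 2 / ((d : ℝ) - 1) with hB
  set D : ℝ := ((d : ℝ) - 3) / ((d : ℝ) - 1) with hD
  set U : Set ℝ := {x | 0 < u x} with hUdef
  have hUopen : IsOpen U := isOpen_lt continuous_const (by rw [hu]; fun_prop)
  set h : ℝ → ℝ := fun x => A * (1 - B * (u x) ^ m - D * (u x) ^ (2 : ℤ)) with hh
  have hφh : ∀ x ∈ U, φ x = h x := by
    intro x hx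
    have hux : u x = 1 + C * x / 2 := by rw [hu]; show 1 + c * x = _; rw [hc]; ring
    have hx0 : (0:ℝ) < u x := hx
    rw [hux] at hx0
    rw [hφ x hx0, hh]
    simp only [← hux]
    norm_num [zpow_two, pow_two]
  have hmem : ∀ x ∈ U, u x ≠ 0 := fun x hx => ne_of_gt hx
  have hud : ∀ x : ℝ, HasDerivAt u c x := by
    intro x
    rw [hu]
    simpa using ((hasDerivAt_id x).const_mul c).const_add 1
  have hzd : ∀ (e : ℤ) (x : ℝ), x ∈ U →
      HasDerivAt (fun y => (u y) ^ e) ((e : ℝ) * (u x) ^ (e - 1) * c) x := by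
    intro e x hx
    exact (hasDerivAt_zpow e (u x) (Or.inl (hmem x hx))).comp x (hud x)
  have key : ∀ k : ℕ, 1 ≤ k → ∀ x ∈ U, iteratedDeriv k h x =
      A * (-(B * c ^ k * (∏ j ∈ Finset.range k, ((m : ℝ) - j)) * (u x) ^ (m - (k : ℤ)))
        - D * c ^ k * (∏ j ∈ Finset.range k, ((2 : ℝ) - j)) * (u x) ^ ((2 : ℤ) - (k : ℤ))) := by
    intro k hk
    induction k with
    | zero => omega
    | succ k ih =>
      rcases Nat.eq_or_lt_of_le hk with h1 | h1
      · -- base case k = 0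
        intro x hx
        have hk0 : k = 0 := by omega
        subst hk0
        rw [iteratedDeriv_one]
        have hder : HasDerivAt h
            (A * ((0 - B * ((m : ℝ) * u x ^ (m - 1) * c)) -
              D * (((2:ℤ) : ℝ) * u x ^ ((2:ℤ) - 1) * c))) x := by
          rw [hh]
          exact (((hasDerivAt_const x (1:ℝ)).sub ((hzd m x hx).const_mul B)).sub
            ((hzd 2 x hx).const_mul D)).const_mul A
        rw [hder.deriv]
        simp only [zero_add, Finset.prod_range_one, pow_one, Nat.cast_one]
        push_cast
        ring
      · -- inductive step, k ≥ 1
        have hk1 : 1 ≤ k := by omega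
        intro x hx
        rw [iteratedDeriv_succ]
        have hev : iteratedDeriv k h =ᶠ[nhds x] (fun y =>
            A * (-(B * c ^ k * (∏ j ∈ Finset.range k, ((m : ℝ) - j)) * (u y) ^ (m - (k : ℤ)))
              - D * c ^ k * (∏ j ∈ Finset.range k, ((2 : ℝ) - j)) * (u y) ^ ((2 : ℤ) - (k : ℤ)))) := by
          filter_upwards [hUopen.mem_nhds hx] with y hy
          exact ih hk1 y hy
        rw [hev.deriv_eq]
        have hder : HasDerivAt (fun y =>
            A * (-(B * c ^ k * (∏ j ∈ Finset.range k, ((m : ℝ) - j)) * (u y) ^ (m - (k : ℤ)))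
              - D * c ^ k * (∏ j ∈ Finset.range k, ((2 : ℝ) - j)) * (u y) ^ ((2 : ℤ) - (k : ℤ))))
            (A * (-(B * c ^ k * (∏ j ∈ Finset.range k, ((m : ℝ) - j)) *
                (((m - (k:ℤ) : ℤ) : ℝ) * (u x) ^ (m - (k:ℤ) - 1) * c))
              - D * c ^ k * (∏ j ∈ Finset.range k, ((2 : ℝ) - j)) *
                ((((2:ℤ) - (k:ℤ) : ℤ) : ℝ) * (u x) ^ ((2:ℤ) - (k:ℤ) - 1) * c))) x := by
          exact (((hzd (m - (k:ℤ)) x hx).const_mul _).neg.sub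
            ((hzd ((2:ℤ) - (k:ℤ)) x hx).const_mul _)).const_mul A
        rw [hder.deriv]
        rw [Finset.prod_range_succ, Finset.prod_range_succ]
        have e1 : m - ((k:ℤ) + 1) = m - (k:ℤ) - 1 := by ring
        have e2 : (2:ℤ) - ((k:ℤ) + 1) = (2:ℤ) - (k:ℤ) - 1 := by ring
        push_cast
        rw [e1, e2]
        ring
  -- transfer to x = 0
  have h0U : (0 : ℝ) ∈ U := by rw [hUdef]; show (0:ℝ) < u 0; rw [hu]; norm_num
  have hev0 : φ =ᶠ[nhds (0:ℝ)] h := by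
    filter_upwards [hUopen.mem_nhds h0U] with y hy using hφh y hy
  rw [hev0.iteratedDeriv_eq]
  rw [key (n+2) (by omega) 0 h0U]
  have hu0 : u 0 = 1 := by rw [hu]; norm_num
  rw [hu0, one_zpow, one_zpow]
  have hq : (∏ j ∈ Finset.range (n+2), ((2 : ℝ) - j)) = 0 := by
    apply Finset.prod_eq_zero (i := 2)
    · exact Finset.mem_range.mpr (by omega)
    · norm_num
  rw [hq]
  have hprod : (∏ j ∈ Finset.range (n+2), ((m : ℝ) - j)) =
      (-1) ^ (n+2) * ((Nat.factorial (d - 4 + (n+2)) : ℝ) / (Nat.factorial (d-4) : ℝ)) := by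
    have hstep : ∀ j ∈ Finset.range (n+2), ((m : ℝ) - j) = (-1) * (((d - 4 : ℕ) : ℝ) + 1 + j) := by
      intro j _
      have hc4 : ((d - 4 : ℕ) : ℝ) = (d : ℝ) - 4 := by push_cast [hd]; ring
      rw [hc4, hm]
      push_cast
      ring
    rw [Finset.prod_congr rfl hstep, Finset.prod_mul_distrib, Finset.prod_const,
      Finset.card_range, prod_shift_factorial (d-4) (n+2)]
  rw [hprod]
  have hd2 : d - 2 + n = d - 4 + (n + 2) := by omega
  have hfac : (Nat.factorial (d-3) : ℝ) = ((d:ℝ) - 3) * (Nat.factorial (d-4) : ℝ) := by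
    have h34 : d - 3 = (d - 4) + 1 := by omega
    rw [h34, Nat.factorial_succ]
    push_cast
    congr 1
    have hc4 : ((d - 4 : ℕ) : ℝ) = (d : ℝ) - 4 := by push_cast [hd]; ring
    rw [hc4]; ring
  rw [hd2, hA, hB, hc, hfac]
  have hd3 : ((d:ℝ) - 3) ≠ 0 := by
    have : (4:ℝ) ≤ (d:ℝ) := by exact_mod_cast hd
    nlinarith
  have hd1 : ((d:ℝ) - 1) ≠ 0 := by
    have : (4:ℝ) ≤ (d:ℝ) := by exact_mod_cast hd
    nlinarith
  have hf4 : (Nat.factorial (d-4) : ℝ) ≠ 0 := Nat.cast_ne_zero.mpr (Nat.factorial_ne_zero _)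
  have hm1 : ((-1:ℝ)) ^ (n+2) = (-1:ℝ)^n := by
    rw [pow_add]; norm_num
  rw [hm1]
  field_simp
  ring
end
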